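/- Let P be a poset on a finite set U obtained from the antichain on U by a sequence of c comparisons; that is, there exist posets P_0, P_1, …, P_c on U such that P_0 is the antichain, P_c = P, and for each i there are u_i, v_i incomparable in P_i with P_{i+1} = P_i[u_i→v_i]. Then the Hasse diagram of P has at most c edges. -/

import Mathlib

/-- The poset `P[u→v]`: the partial order on `U` obtained as the transitive closure of
`≼ ∪ {(u,v)}`, assuming `¬ (v ≼ u)`. Explicitly, `a ≤ b` iff `a ≼ b`, or `a ≼ u` and `v ≼ b`. -/
def extend {U : Type*} (P : PartialOrder U) (u v : U) (h : ¬ P.le v u) : PartialOrder U where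
  le a b := P.le a b ∨ (P.le a u ∧ P.le v b)
  lt a b := (P.le a b ∨ (P.le a u ∧ P.le v b)) ∧ ¬ (P.le b a ∨ (P.le b u ∧ P.le v a))
  lt_iff_le_not_ge _ _ := Iff.rfl
  le_refl a := Or.inl (P.le_refl a)
  le_trans a b c hab hbc := by
    rcases hab with hab | ⟨hau, hvb⟩
    · rcases hbc with hbc | ⟨hbu, hvc⟩
      · exact Or.inl (P.le_trans _ _ _ hab hbc)
      · exact Or.inr ⟨P.le_trans _ _ _ hab hbu, hvc⟩
    · rcases hbc with hbc | ⟨hbu, hvc⟩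
      · exact Or.inr ⟨hau, P.le_trans _ _ _ hvb hbc⟩
      · exact absurd (P.le_trans _ _ _ hvb hbu) h
  le_antisymm a b hab hba := by
    rcases hab with hab | ⟨hau, hvb⟩
    · rcases hba with hba | ⟨hbu, hva⟩
      · exact P.le_antisymm _ _ hab hba
      · exact absurd (P.le_trans _ _ _ hva (P.le_trans _ _ _ hab hbu)) h
    · rcases hba with hba | ⟨hbu, hva⟩
      · exact absurd (P.le_trans _ _ _ hvb (P.le_trans _ _ _ hba hau)) h
      · exact absurd (P.le_trans _ _ _ hvb hbu) h

/-- `Sortable P c`: the poset `P` can be sorted using at most `c` comparisons.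
Either `P` is a linear order, or `c ≥ 1` and there are incomparable `u, v` such that
both outcomes `P[u→v]` and `P[v→u]` of the comparison are sortable in `c - 1` comparisons. -/
inductive Sortable {U : Type*} : PartialOrder U → ℕ → Prop
  | linear {P : PartialOrder U} {c : ℕ} (h : ∀ a b : U, P.le a b ∨ P.le b a) : Sortable P c
  | step {P : PartialOrder U} {c : ℕ} (u v : U) (h1 : ¬ P.le u v) (h2 : ¬ P.le v u)
      (s1 : Sortable (extend P u v h2) c) (s2 : Sortable (extend P v u h1) c) :
      Sortable P (c + 1)

/-- The antichain (trivially ordered poset): distinct elements are incomparable. -/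
def trivialOrder (U : Type*) : PartialOrder U where
  le a b := a = b
  lt _ _ := False
  lt_iff_le_not_ge _ _ := ⟨fun h => h.elim, fun h => (h.2 h.1.symm).elim⟩
  le_refl _ := rfl
  le_trans _ _ _ h1 h2 := Eq.trans h1 h2
  le_antisymm _ _ h1 _ := h1

/-- `S n`: the minimum number of comparisons sufficient to sort `n` elements in the
worst case, i.e. the least `c` such that the antichain on `n` elements is sortable
in `c` comparisons. -/
noncomputable def S (n : ℕ) : ℕ := sInf {c : ℕ | Sortable (trivialOrder (Fin n)) c}

/-- `numExt P` is `e(P)`, the number of linear extensions of `P`, i.e. the number of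
linear orders on `U` extending the order of `P`. -/
noncomputable def numExt {U : Type*} (P : PartialOrder U) : ℕ :=
  Nat.card {L : PartialOrder U //
    (∀ a b : U, L.le a b ∨ L.le b a) ∧ (∀ a b : U, P.le a b → L.le a b)}

/-- The efficiency `E(Q) = |U|! / (2^d · e(Q))` of a poset obtained after `d` comparisons. -/
noncomputable def efficiency {U : Type*} [Fintype U] (d : ℕ) (Q : PartialOrder U) : ℝ :=
  (Nat.factorial (Fintype.card U) : ℝ) / ((2 ^ d : ℝ) * (numExt Q : ℝ))

/-- `covers P a b`: `(a, b)` is an edge of the Hasse diagram of `P`, i.e. `b` covers `a`: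
`a ≺ b` and there is no `w` with `a ≺ w ≺ b`. -/
def covers {U : Type*} (P : PartialOrder U) (a b : U) : Prop :=
  P.lt a b ∧ ∀ w, ¬ (P.lt a w ∧ P.lt w b)

/-- The dual of a poset, obtained by reversing the order relation. -/
def dualOrder {U : Type*} (P : PartialOrder U) : PartialOrder U where
  le a b := P.le b a
  lt a b := P.le b a ∧ ¬ P.le a b
  lt_iff_le_not_ge _ _ := Iff.rfl
  le_refl a := P.le_refl a
  le_trans _ _ _ h1 h2 := P.le_trans _ _ _ h2 h1
  le_antisymm _ _ h1 h2 := P.le_antisymm _ _ h2 h1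

/-- The restriction of a poset to a subset of its underlying set. -/
def restrict {U : Type*} (P : PartialOrder U) (D : Set U) : PartialOrder D where
  le a b := P.le a.1 b.1
  lt a b := P.le a.1 b.1 ∧ ¬ P.le b.1 a.1
  lt_iff_le_not_ge _ _ := Iff.rfl
  le_refl a := P.le_refl a.1
  le_trans _ _ _ h1 h2 := P.le_trans _ _ _ h1 h2
  le_antisymm _ _ h1 h2 := Subtype.ext (P.le_antisymm _ _ h1 h2)

/-- `D` is a down-set (lower set) of `P`. -/
def isDownSet {U : Type*} (P : PartialOrder U) (D : Set U) : Prop :=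
  ∀ ⦃x⦄, x ∈ D → ∀ ⦃y⦄, P.le y x → y ∈ D

/-- `V` is an up-set (upper set) of `P`. -/
def isUpSet {U : Type*} (P : PartialOrder U) (V : Set U) : Prop :=
  ∀ ⦃x⦄, x ∈ V → ∀ ⦃y⦄, P.le x y → y ∈ V

/-- The disjoint union of two posets: elements from different parts are incomparable. -/
def sumOrder {α β : Type*} (P : PartialOrder α) (Q : PartialOrder β) :
    PartialOrder (α ⊕ β) where
  le := Sum.LiftRel P.le Q.le
  lt x y := Sum.LiftRel P.le Q.le x y ∧ ¬ Sum.LiftRel P.le Q.le y x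
  lt_iff_le_not_ge _ _ := Iff.rfl
  le_refl x := by
    cases x with
    | inl a => exact Sum.LiftRel.inl (P.le_refl a)
    | inr b => exact Sum.LiftRel.inr (Q.le_refl b)
  le_trans x y z h1 h2 := by
    cases h1 with
    | inl h1 =>
      cases h2 with
      | inl h2 => exact Sum.LiftRel.inl (P.le_trans _ _ _ h1 h2)
    | inr h1 =>
      cases h2 with
      | inr h2 => exact Sum.LiftRel.inr (Q.le_trans _ _ _ h1 h2)
  le_antisymm x y h1 h2 := by
    cases h1 with
    | inl h1 =>
      cases h2 with
      | inl h2 => exact congrArg Sum.inl (P.le_antisymm _ _ h1 h2)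
    | inr h1 =>
      cases h2 with
      | inr h2 => exact congrArg Sum.inr (Q.le_antisymm _ _ h1 h2)


lemma lt_extend_of_lt {U : Type*} {P : PartialOrder U} {u v : U} {h : ¬ P.le v u} {x y : U}
    (hxy : P.lt x y) : (extend P u v h).lt x y := by
  obtain ⟨hle, hnle⟩ := (P.lt_iff_le_not_ge x y).mp hxy
  refine ⟨Or.inl hle, ?_⟩
  rintro (hyx | ⟨hyu, hvx⟩)
  · exact hnle hyx
  · exact h (P.le_trans _ _ _ hvx (P.le_trans _ _ _ hle hyu))

lemma covers_extend {U : Type*} {P : PartialOrder U} {u v : U} {h2 : ¬ P.le v u} {a b : U}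
    (hc : covers (extend P u v h2) a b) : covers P a b ∨ (a = u ∧ b = v) := by
  obtain ⟨hlt, hmin⟩ := hc
  obtain ⟨hle, hnle⟩ := hlt
  by_cases hab : P.le a b
  · left
    have hnba : ¬ P.le b a := fun hba => hnle (Or.inl hba)
    refine ⟨(P.lt_iff_le_not_ge a b).mpr ⟨hab, hnba⟩, ?_⟩
    rintro w ⟨haw, hwb⟩
    exact hmin w ⟨lt_extend_of_lt haw, lt_extend_of_lt hwb⟩
  · rcases hle with hle | ⟨hau, hvb⟩
    · exact absurd hle hab
    right
    constructor
    · by_contra hne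
      refine hmin u ⟨⟨Or.inl hau, ?_⟩, ⟨Or.inr ⟨P.le_refl u, hvb⟩, ?_⟩⟩
      · rintro (hua | ⟨huu, hva⟩)
        · exact hne (P.le_antisymm _ _ hau hua)
        · exact h2 (P.le_trans _ _ _ hva hau)
      · rintro (hbu | ⟨hbu, hvu⟩)
        · exact h2 (P.le_trans _ _ _ hvb hbu)
        · exact h2 hvu
    · by_contra hne
      refine hmin v ⟨⟨Or.inr ⟨hau, P.le_refl v⟩, ?_⟩, ⟨Or.inl hvb, ?_⟩⟩
      · rintro (hva | ⟨hvu, hva⟩)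
        · exact h2 (P.le_trans _ _ _ hva hau)
        · exact h2 hvu
      · rintro (hbv | ⟨hbu, hvv⟩)
        · exact hne (P.le_antisymm _ _ hvb hbv).symm
        · exact h2 (P.le_trans _ _ _ hvb hbu)

/-- If a poset `P` on a finite set `U` is obtained from the antichain on `U` by a sequence
of `c` comparisons, then the Hasse diagram of `P` has at most `c` edges. -/
theorem hasse_card_le_of_comparisons {U : Type*} [Fintype U] (P : PartialOrder U) (c : ℕ)
    (Q : ℕ → PartialOrder U) (h0 : Q 0 = trivialOrder U) (hc : Q c = P)
    (hstep : ∀ i < c, ∃ (u v : U) (h1 : ¬ (Q i).le u v) (h2 : ¬ (Q i).le v u),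
      Q (i + 1) = extend (Q i) u v h2) :
    Nat.card {p : U × U // covers P p.1 p.2} ≤ c := by

  have key : ∀ i, i ≤ c → Set.ncard {p : U × U | covers (Q i) p.1 p.2} ≤ i := by
    intro i
    induction i with
    | zero =>
      intro _
      have : {p : U × U | covers (Q 0) p.1 p.2} = ∅ := by
        rw [h0]
        ext p
        simp only [Set.mem_setOf_eq, Set.mem_empty_iff_false, iff_false]
        intro hp
        exact hp.1
      simp [this]
    | succ i ih =>
      intro hi
      obtain ⟨u, v, h1, h2, heq⟩ := hstep i (by omega)
      have hsub : {p : U × U | covers (Q (i + 1)) p.1 p.2} ⊆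
          insert (u, v) {p : U × U | covers (Q i) p.1 p.2} := by
        intro p hp
        rw [heq] at hp
        rcases covers_extend hp with hcov | ⟨ha, hb⟩
        · exact Set.mem_insert_of_mem _ hcov
        · left
          exact Prod.ext ha hb
      calc Set.ncard {p : U × U | covers (Q (i + 1)) p.1 p.2}
          ≤ Set.ncard (insert (u, v) {p : U × U | covers (Q i) p.1 p.2}) :=
            Set.ncard_le_ncard hsub (Set.toFinite _)
        _ ≤ Set.ncard {p : U × U | covers (Q i) p.1 p.2} + 1 :=
            Set.ncard_insert_le _ _
        _ ≤ i + 1 := by omega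
  have := key c le_rfl
  rw [hc] at this
  rw [← Nat.card_coe_set_eq] at this
  exact this
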